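/- Let R be a commutative ring. The R-algebra R[z₁,z₂]/(z₁³, z₁z₂, z₂²) is free of rank 4 as an R-module, with basis 1, z₁, z₁², z₂. -/

import Mathlib

open MvPolynomial

namespace QuotFreeRank4

variable (R : Type*) [CommRing R]

/-- the exponents of the four basis monomials -/
noncomputable def e : Fin 4 → (Fin 2 →₀ ℕ) :=
  ![0, Finsupp.single 0 1, Finsupp.single 0 2, Finsupp.single 1 1]

lemma e_injective : Function.Injective (e) := by
  intro i j h
  have h0 := DFunLike.congr_fun h 0
  have h1 := DFunLike.congr_fun h 1
  fin_cases i <;> fin_cases j <;>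
    simp_all [e, DFunLike.ext_iff, Fin.forall_fin_two, Finsupp.single_apply]

lemma coeff_eq_zero_of_mem (q : MvPolynomial (Fin 2) R)
    (hq : q ∈ Ideal.span {(X 0 ^ 3 : MvPolynomial (Fin 2) R), X 0 * X 1, X 1 ^ 2}) (i : Fin 4) :
    coeff (e i) q = 0 := by
  rw [Ideal.mem_span_insert] at hq
  obtain ⟨a, z, hz, rfl⟩ := hq
  rw [Ideal.mem_span_insert] at hz
  obtain ⟨b, w, hw, rfl⟩ := hz
  rw [Ideal.mem_span_singleton] at hw
  obtain ⟨c, rfl⟩ := hw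
  have h1 : (X 0 ^ 3 : MvPolynomial (Fin 2) R) = monomial (Finsupp.single 0 3) 1 :=
    X_pow_eq_monomial
  have h2 : (X 0 * X 1 : MvPolynomial (Fin 2) R) =
      monomial (Finsupp.single 0 1 + Finsupp.single 1 1) 1 := by
    rw [X, X, monomial_mul, one_mul]
  have h3 : (X 1 ^ 2 : MvPolynomial (Fin 2) R) = monomial (Finsupp.single 1 2) 1 :=
    X_pow_eq_monomial
  rw [mul_comm (X 1 ^ 2) c, h1, h2, h3, coeff_add, coeff_add,
    coeff_mul_monomial', coeff_mul_monomial', coeff_mul_monomial']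
  rw [if_neg, if_neg, if_neg]
  · simp
  · intro h
    have := Finsupp.le_def.mp h 1
    fin_cases i <;> simp_all [e, Finsupp.single_apply]
  · intro h
    have ha := Finsupp.le_def.mp h 0
    have hb := Finsupp.le_def.mp h 1
    fin_cases i <;> simp_all [e, Finsupp.single_apply]
  · intro h
    have := Finsupp.le_def.mp h 0
    fin_cases i <;> simp_all [e, Finsupp.single_apply]

noncomputable def v : Fin 4 →
    MvPolynomial (Fin 2) R ⧸
      Ideal.span {(X 0 ^ 3 : MvPolynomial (Fin 2) R), X 0 * X 1, X 1 ^ 2} :=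
  fun i => Ideal.Quotient.mkₐ R _ (monomial (e i) 1)

lemma m0 : (monomial (e 0) 1 : MvPolynomial (Fin 2) R) = 1 := by
  show (monomial 0 1 : MvPolynomial (Fin 2) R) = 1
  rw [monomial_zero', map_one]

lemma m1 : (monomial (e 1) 1 : MvPolynomial (Fin 2) R) = X 0 := by
  show (monomial (Finsupp.single 0 1) 1 : MvPolynomial (Fin 2) R) = X 0
  rw [← X_pow_eq_monomial, pow_one]

lemma m2 : (monomial (e 2) 1 : MvPolynomial (Fin 2) R) = X 0 ^ 2 := by
  show (monomial (Finsupp.single 0 2) 1 : MvPolynomial (Fin 2) R) = X 0 ^ 2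
  rw [← X_pow_eq_monomial]

lemma m3 : (monomial (e 3) 1 : MvPolynomial (Fin 2) R) = X 1 := by
  show (monomial (Finsupp.single 1 1) 1 : MvPolynomial (Fin 2) R) = X 1
  rw [← X_pow_eq_monomial, pow_one]

lemma v_li : LinearIndependent R (v R) := by
  rw [Fintype.linearIndependent_iff]
  intro g hg i
  have hmk : Ideal.Quotient.mkₐ R _ (∑ j, monomial (e j) (g j)) = (0 :
      MvPolynomial (Fin 2) R ⧸
        Ideal.span {(X 0 ^ 3 : MvPolynomial (Fin 2) R), X 0 * X 1, X 1 ^ 2}) := by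
    rw [map_sum, ← hg]
    refine Finset.sum_congr rfl fun j _ => ?_
    rw [v, ← map_smul, smul_monomial, smul_eq_mul, mul_one]
  rw [Ideal.Quotient.mkₐ_eq_mk, Ideal.Quotient.eq_zero_iff_mem] at hmk
  have hc := coeff_eq_zero_of_mem R _ hmk i
  rw [coeff_sum] at hc
  simp only [coeff_monomial] at hc
  rwa [Finset.sum_eq_single i (fun j _ hj => if_neg (fun h => hj (e_injective h)))
    (by simp), if_pos rfl] at hc

lemma mem_ideal_zero {p : MvPolynomial (Fin 2) R}
    (hp : p ∈ Ideal.span {(X 0 ^ 3 : MvPolynomial (Fin 2) R), X 0 * X 1, X 1 ^ 2}) :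
    Ideal.Quotient.mkₐ R _ p = (0 :
      MvPolynomial (Fin 2) R ⧸
        Ideal.span {(X 0 ^ 3 : MvPolynomial (Fin 2) R), X 0 * X 1, X 1 ^ 2}) := by
  rw [Ideal.Quotient.mkₐ_eq_mk, Ideal.Quotient.eq_zero_iff_mem]; exact hp

set_option maxHeartbeats 1000000 in
lemma v_span : ⊤ ≤ Submodule.span R (Set.range (v R)) := by
  have key : ∀ x ∈ Submodule.span R (Set.range (v R)), ∀ j : Fin 2,
      x * Ideal.Quotient.mkₐ R _ (X j) ∈ Submodule.span R (Set.range (v R)) := by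
    intro x hx j
    induction hx using Submodule.span_induction with
    | mem y hy =>
      obtain ⟨i, rfl⟩ := hy
      rw [v, ← map_mul]
      fin_cases i <;> fin_cases j
      · show Ideal.Quotient.mkₐ R _ (monomial (e 0) 1 * X 0) ∈ Submodule.span R (Set.range (v R))
        rw [m0, one_mul]; exact Submodule.subset_span ⟨1, congrArg _ (m1 R)⟩
      · show Ideal.Quotient.mkₐ R _ (monomial (e 0) 1 * X 1) ∈ Submodule.span R (Set.range (v R))
        rw [m0, one_mul]; exact Submodule.subset_span ⟨3, congrArg _ (m3 R)⟩
      · show Ideal.Quotient.mkₐ R _ (monomial (e 1) 1 * X 0) ∈ Submodule.span R (Set.range (v R))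
        rw [m1, show (X 0 * X 0 : MvPolynomial (Fin 2) R) = X 0 ^ 2 from (pow_two _).symm]
        exact Submodule.subset_span ⟨2, congrArg _ (m2 R)⟩
      · show Ideal.Quotient.mkₐ R _ (monomial (e 1) 1 * X 1) ∈ Submodule.span R (Set.range (v R))
        rw [m1, mem_ideal_zero R (Ideal.subset_span (by simp))]
        exact Submodule.zero_mem _
      · show Ideal.Quotient.mkₐ R _ (monomial (e 2) 1 * X 0) ∈ Submodule.span R (Set.range (v R))
        rw [m2, ← pow_succ, mem_ideal_zero R (Ideal.subset_span (by simp))]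
        exact Submodule.zero_mem _
      · show Ideal.Quotient.mkₐ R _ (monomial (e 2) 1 * X 1) ∈ Submodule.span R (Set.range (v R))
        rw [m2, mem_ideal_zero R ?_]
        · exact Submodule.zero_mem _
        · rw [show (X 0 ^ 2 * X 1 : MvPolynomial (Fin 2) R) = X 0 * (X 0 * X 1) by ring]
          exact Ideal.mul_mem_left _ _ (Ideal.subset_span (by simp))
      · show Ideal.Quotient.mkₐ R _ (monomial (e 3) 1 * X 0) ∈ Submodule.span R (Set.range (v R))
        rw [m3, show (X 1 * X 0 : MvPolynomial (Fin 2) R) = X 0 * X 1 from mul_comm _ _,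
          mem_ideal_zero R (Ideal.subset_span (by simp))]
        exact Submodule.zero_mem _
      · show Ideal.Quotient.mkₐ R _ (monomial (e 3) 1 * X 1) ∈ Submodule.span R (Set.range (v R))
        rw [m3, show (X 1 * X 1 : MvPolynomial (Fin 2) R) = X 1 ^ 2 from (pow_two _).symm,
          mem_ideal_zero R (Ideal.subset_span (by simp))]
        exact Submodule.zero_mem _
    | zero => simp
    | add a b _ _ ha hb => rw [add_mul]; exact Submodule.add_mem _ ha hb
    | smul r a _ ha => rw [smul_mul_assoc]; exact Submodule.smul_mem _ _ ha
  rintro x -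
  obtain ⟨p, rfl⟩ := Ideal.Quotient.mkₐ_surjective R _ x
  induction p using MvPolynomial.induction_on with
  | C a =>
    have : Ideal.Quotient.mkₐ R _ (C a : MvPolynomial (Fin 2) R) = a • v R 0 := by
      rw [v, ← map_smul, smul_monomial, smul_eq_mul, mul_one]
      exact congrArg _ (by rw [show e 0 = 0 from rfl, monomial_zero'])
    rw [this]
    exact Submodule.smul_mem _ _ (Submodule.subset_span ⟨0, rfl⟩)
  | add p q hp hq => rw [map_add]; exact Submodule.add_mem _ hp hq
  | mul_X p j hp => rw [map_mul]; exact key _ hp j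

end QuotFreeRank4

/-- The `R`-algebra `R[z₁,z₂]/(z₁³, z₁z₂, z₂²)` is free of rank 4 as an `R`-module, with
basis `1, z₁, z₁², z₂`. -/
theorem quotient_free_rank_four
    (R : Type*) [CommRing R] :
    ∃ b : Module.Basis (Fin 4) R (MvPolynomial (Fin 2) R ⧸
        Ideal.span {(X 0 ^ 3 : MvPolynomial (Fin 2) R), X 0 * X 1, X 1 ^ 2}),
      b 0 = Ideal.Quotient.mk _ 1 ∧
      b 1 = Ideal.Quotient.mk _ (X 0) ∧
      b 2 = Ideal.Quotient.mk _ (X 0 ^ 2) ∧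
      b 3 = Ideal.Quotient.mk _ (X 1) := by
  refine ⟨Module.Basis.mk (QuotFreeRank4.v_li R) (QuotFreeRank4.v_span R), ?_, ?_, ?_, ?_⟩ <;>
      rw [Module.Basis.mk_apply, QuotFreeRank4.v, Ideal.Quotient.mkₐ_eq_mk]
  · rw [QuotFreeRank4.m0]
  · rw [QuotFreeRank4.m1]
  · rw [QuotFreeRank4.m2]
  · rw [QuotFreeRank4.m3]
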